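/- Let L be a real symmetric positive semidefinite N×N matrix satisfying L𝟏 = 𝟎 whose kernel is exactly the span of the all-ones vector 𝟏, let D be a diagonal N×N matrix with positive diagonal entries d₁,…,d_N, set d_sum = Σ_i d_i, 𝓛 = D^{-1/2} L D^{-1/2}, and let π ∈ ℝ^N be the vector with π_i = d_i/d_sum. Then the weighted trace identity Σ_{i=1}^{N} π_i (e_iᵀ 𝓛† e_i) = d_sum · Σ_{i=1}^{N} π_i² (e_i − π)ᵀ L† (e_i − π) holds. -/

import Mathlib

open Matrix

/-- `P` is the Moore–Penrose pseudoinverse of `M`. -/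
def IsMoorePenrose {n : Type*} [Fintype n] [DecidableEq n]
    (M P : Matrix n n ℝ) : Prop :=
  M * P * M = M ∧ P * M * P = P ∧ (M * P)ᵀ = M * P ∧ (P * M)ᵀ = P * M

lemma mp_transpose {n : Type*} [Fintype n] [DecidableEq n] {M P : Matrix n n ℝ}
    (h : IsMoorePenrose M P) : IsMoorePenrose Mᵀ Pᵀ := by
  obtain ⟨h1, h2, h3, h4⟩ := h
  refine ⟨?_, ?_, ?_, ?_⟩
  · calc Mᵀ * Pᵀ * Mᵀ = (M * P * M)ᵀ := by simp [Matrix.transpose_mul, mul_assoc]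
    _ = Mᵀ := by rw [h1]
  · calc Pᵀ * Mᵀ * Pᵀ = (P * M * P)ᵀ := by simp [Matrix.transpose_mul, mul_assoc]
    _ = Pᵀ := by rw [h2]
  · have hth : Mᵀ * Pᵀ = (P * M)ᵀ := (Matrix.transpose_mul P M).symm
    rw [hth, Matrix.transpose_transpose]
    exact h4.symm
  · have hth : Pᵀ * Mᵀ = (M * P)ᵀ := (Matrix.transpose_mul M P).symm
    rw [hth, Matrix.transpose_transpose]
    exact h3.symm

lemma mp_unique {n : Type*} [Fintype n] [DecidableEq n] {M P1 P2 : Matrix n n ℝ}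
    (h : IsMoorePenrose M P1) (h' : IsMoorePenrose M P2) : P1 = P2 := by
  obtain ⟨a1, b1, c1, d1⟩ := h
  obtain ⟨a2, b2, c2, d2⟩ := h'
  have e1 : M * P2 = (M * P1) * (M * P2) := by
    conv_lhs => rw [← a1]
    noncomm_ring
  have e2 : M * P1 = (M * P2) * (M * P1) := by
    conv_lhs => rw [← a2]
    noncomm_ring
  have hMP : M * P1 = M * P2 := by
    calc M * P1 = (M * P1)ᵀ := c1.symm
    _ = ((M * P2) * (M * P1))ᵀ := by rw [← e2]
    _ = (M * P1)ᵀ * (M * P2)ᵀ := by rw [Matrix.transpose_mul]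
    _ = (M * P1) * (M * P2) := by rw [c1, c2]
    _ = M * P2 := e1.symm
  have f1 : P1 * M = (P1 * M) * (P2 * M) := by
    conv_lhs => rw [← a2]
    noncomm_ring
  have f2 : P2 * M = (P2 * M) * (P1 * M) := by
    conv_lhs => rw [← a1]
    noncomm_ring
  have hPM : P1 * M = P2 * M := by
    calc P1 * M = (P1 * M)ᵀ := d1.symm
    _ = ((P1 * M) * (P2 * M))ᵀ := by rw [← f1]
    _ = (P2 * M)ᵀ * (P1 * M)ᵀ := by rw [Matrix.transpose_mul]
    _ = (P2 * M) * (P1 * M) := by rw [d1, d2]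
    _ = P2 * M := f2.symm
  calc P1 = P1 * M * P1 := b1.symm
  _ = P1 * (M * P1) := by rw [mul_assoc]
  _ = P1 * (M * P2) := by rw [hMP]
  _ = (P1 * M) * P2 := by rw [mul_assoc]
  _ = (P2 * M) * P2 := by rw [hPM]
  _ = P2 := b2

lemma vecMulVec_mul' {n : Type*} [Fintype n] (u v : n → ℝ) (M : Matrix n n ℝ) :
    vecMulVec u v * M = vecMulVec u (v ᵥ* M) := by
  ext i j
  simp [Matrix.mul_apply, vecMulVec_apply, Matrix.vecMul, dotProduct,
    Finset.mul_sum, mul_assoc]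

lemma mul_vecMulVec' {n : Type*} [Fintype n] (u v : n → ℝ) (M : Matrix n n ℝ) :
    M * vecMulVec u v = vecMulVec (M *ᵥ u) v := by
  ext i j
  simp only [Matrix.mul_apply, vecMulVec_apply, Matrix.mulVec, dotProduct]
  rw [Finset.sum_mul]
  exact Finset.sum_congr rfl fun k _ => by ring

lemma vecMulVec_mul_vecMulVec' {n : Type*} [Fintype n] (a b c e : n → ℝ) :
    vecMulVec a b * vecMulVec c e = (b ⬝ᵥ c) • vecMulVec a e := by
  ext i j
  simp [Matrix.mul_apply, vecMulVec_apply, dotProduct, Finset.sum_mul,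
    Finset.mul_sum]
  ring_nf
  exact Finset.sum_congr rfl fun k _ => by ring

lemma vecMulVec_transpose' {n : Type*} (a b : n → ℝ) :
    (vecMulVec a b)ᵀ = vecMulVec b a := by
  ext i j; simp [vecMulVec_apply, mul_comm]

/-- with `L`, `D`, `𝓛 = D^{-1/2} L D^{-1/2}` and `π_i = d_i/d_sum`
as below, the weighted trace identity
`Σ_i π_i (e_iᵀ 𝓛† e_i) = d_sum · Σ_i π_i² (e_i − π)ᵀ L† (e_i − π)` holds. -/
theorem stmt7 (N : ℕ) (hN : 2 ≤ N)
    (L : Matrix (Fin N) (Fin N) ℝ) (hPSD : L.PosSemidef)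
    (hker : ∀ v : Fin N → ℝ, L.mulVec v = 0 ↔ ∃ c : ℝ, v = fun _ => c)
    (hL1 : L.mulVec (fun _ => 1) = 0)
    (d : Fin N → ℝ) (hdpos : ∀ i, 0 < d i)
    (dsum : ℝ) (hdsum : dsum = ∑ i, d i)
    (pv : Fin N → ℝ) (hpv : ∀ i, pv i = d i / dsum)
    (Lp Np : Matrix (Fin N) (Fin N) ℝ)
    (hLp : IsMoorePenrose L Lp)
    (hNp : IsMoorePenrose
        (Matrix.diagonal (fun i => (Real.sqrt (d i))⁻¹) * L *
          Matrix.diagonal (fun i => (Real.sqrt (d i))⁻¹)) Np) :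
    ∑ i, pv i * (Pi.single i 1 ⬝ᵥ Np.mulVec (Pi.single i 1)) =
      dsum * ∑ i, (pv i) ^ 2 *
        ((Pi.single i 1 - pv) ⬝ᵥ Lp.mulVec (Pi.single i 1 - pv)) := by
  classical
  have hNpos : 0 < N := by omega
  haveI : Nonempty (Fin N) := Fin.pos_iff_nonempty.mp hNpos
  have hdsum_pos : 0 < dsum := by
    rw [hdsum]; exact Finset.sum_pos (fun i _ => hdpos i) Finset.univ_nonempty
  have hrs : Real.sqrt dsum * Real.sqrt dsum = dsum := Real.mul_self_sqrt hdsum_pos.le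
  have hrs_pos : 0 < Real.sqrt dsum := Real.sqrt_pos.mpr hdsum_pos
  have hsd : ∀ i, Real.sqrt (d i) * Real.sqrt (d i) = d i :=
    fun i => Real.mul_self_sqrt (hdpos i).le
  have hsd_pos : ∀ i, 0 < Real.sqrt (d i) := fun i => Real.sqrt_pos.mpr (hdpos i)
  set Si : Matrix (Fin N) (Fin N) ℝ :=
    Matrix.diagonal (fun i => (Real.sqrt (d i))⁻¹) with hSidef
  set S : Matrix (Fin N) (Fin N) ℝ :=
    Matrix.diagonal (fun i => Real.sqrt (d i)) with hSdef
  set u : Fin N → ℝ := fun i => Real.sqrt (d i) / Real.sqrt dsum with hudef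
  set C : Matrix (Fin N) (Fin N) ℝ := 1 - vecMulVec u u with hCdef
  set Q : Matrix (Fin N) (Fin N) ℝ := C * S * Lp * S * C with hQdef
  set 𝓛 : Matrix (Fin N) (Fin N) ℝ := Si * L * Si with h𝓛def
  obtain ⟨hA, hB, hC3, hD⟩ := hLp
  -- symmetry of L
  have hLsym : Lᵀ = L := by
    ext i j
    have h := congrFun (congrFun hPSD.1 i) j
    simpa [Matrix.conjTranspose_apply] using h
  -- symmetry of Lp
  have hLpsym : Lpᵀ = Lp := by
    have h := mp_transpose ⟨hA, hB, hC3, hD⟩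
    rw [hLsym] at h
    exact mp_unique h ⟨hA, hB, hC3, hD⟩
  -- L * (L * Lp) = L
  have hLLLp : L * (L * Lp) = L := by
    have h := congrArg Matrix.transpose hA
    rw [Matrix.transpose_mul, hC3, hLsym] at h
    exact h
  -- (L * Lp) *ᵥ 1 = 0
  have hLLp1 : (L * Lp) *ᵥ (fun _ : Fin N => (1:ℝ)) = 0 := by
    calc (L * Lp) *ᵥ (fun _ : Fin N => (1:ℝ))
        = (L * Lp)ᵀ *ᵥ (fun _ : Fin N => (1:ℝ)) := by rw [hC3]
    _ = (Lpᵀ * Lᵀ) *ᵥ (fun _ : Fin N => (1:ℝ)) := by rw [Matrix.transpose_mul]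
    _ = Lpᵀ *ᵥ (Lᵀ *ᵥ (fun _ : Fin N => (1:ℝ))) := (Matrix.mulVec_mulVec _ _ _).symm
    _ = Lpᵀ *ᵥ (L *ᵥ (fun _ : Fin N => (1:ℝ))) := by rw [hLsym]
    _ = 0 := by rw [hL1, Matrix.mulVec_zero]
  -- column sums of L * Lp vanish
  have hcolLLp : ∀ j, ∑ i, (L * Lp) i j = 0 := by
    intro j
    have h := congrFun hLLp1 j
    simp only [Matrix.mulVec, dotProduct, mul_one, Pi.zero_apply] at h
    calc ∑ i, (L * Lp) i j = ∑ i, (L * Lp) j i := by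
          refine Finset.sum_congr rfl fun i _ => ?_
          have := congrFun (congrFun hC3 j) i
          simpa [Matrix.transpose_apply] using this
    _ = 0 := h
  -- L*Lp fixes vectors with zero sum
  have lemA : ∀ v : Fin N → ℝ, (∑ i, v i) = 0 → (L * Lp) *ᵥ v = v := by
    intro v hv
    have hLw : L *ᵥ (v - (L * Lp) *ᵥ v) = 0 := by
      rw [Matrix.mulVec_sub, Matrix.mulVec_mulVec, hLLLp, sub_self]
    obtain ⟨c, hc⟩ := (hker _).mp hLw
    have hsum1 : ∑ i, ((L * Lp) *ᵥ v) i = 0 := by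
      simp only [Matrix.mulVec, dotProduct]
      rw [Finset.sum_comm]
      calc ∑ j, ∑ i, (L * Lp) i j * v j
          = ∑ j, (∑ i, (L * Lp) i j) * v j := by
            refine Finset.sum_congr rfl fun j _ => (Finset.sum_mul _ _ _).symm
      _ = 0 := by simp [hcolLLp]
    have hsumw : ∑ i, (v - (L * Lp) *ᵥ v) i = 0 := by
      simp only [Pi.sub_apply, Finset.sum_sub_distrib, hv, hsum1, sub_zero]
    rw [hc] at hsumw
    simp only [Finset.sum_const, Finset.card_univ, Fintype.card_fin, nsmul_eq_mul] at hsumw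
    have hc0 : c = 0 := by
      have hN0 : (N:ℝ) ≠ 0 := Nat.cast_ne_zero.mpr (by omega)
      exact (mul_eq_zero.mp hsumw).resolve_left hN0
    have : v - (L * Lp) *ᵥ v = 0 := by rw [hc, hc0]; ext i; simp
    have := sub_eq_zero.mp this
    exact this.symm
  -- column sums of S * C vanish
  have hcolsum : ∀ j, ∑ a, (S * C) a j = 0 := by
    intro j
    have hval : ∀ a, (S * C) a j
        = Real.sqrt (d a) * ((if a = j then (1:ℝ) else 0) - u a * u j) := by
      intro a
      rw [hSdef, Matrix.diagonal_mul, hCdef]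
      simp [Matrix.sub_apply, Matrix.one_apply, Matrix.vecMulVec_apply]
    rw [Finset.sum_congr rfl fun a _ => hval a]
    have : ∀ a, Real.sqrt (d a) * ((if a = j then (1:ℝ) else 0) - u a * u j)
        = (if a = j then Real.sqrt (d j) else 0) - (d a / dsum) * Real.sqrt (d j) := by
      intro a
      rcases eq_or_ne a j with h | h
      · subst h
        simp only [if_pos rfl, hudef]
        have hda := hsd a
        have hds := hrs
        set sa := Real.sqrt (d a) with hsa
        set rs := Real.sqrt dsum with hrs2
        have hsa0 : sa ≠ 0 := (hsd_pos a).ne'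
        have hrs0 : rs ≠ 0 := hrs_pos.ne'
        rw [← hda, ← hds]
        field_simp
        rw [if_pos trivial, if_pos trivial]; ring
      · simp only [if_neg h, hudef]
        have hda := hsd a
        have hds := hrs
        set sa := Real.sqrt (d a) with hsa
        set sj := Real.sqrt (d j) with hsj
        set rs := Real.sqrt dsum with hrs2
        have hsa0 : sa ≠ 0 := (hsd_pos a).ne'
        have hrs0 : rs ≠ 0 := hrs_pos.ne'
        rw [← hda, ← hds]
        field_simp
        try ring
    rw [Finset.sum_congr rfl fun a _ => this a, Finset.sum_sub_distrib]
    rw [Finset.sum_ite_eq' Finset.univ j (fun _ => Real.sqrt (d j))]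
    simp only [Finset.mem_univ, if_pos]
    rw [← Finset.sum_mul, ← Finset.sum_div, ← hdsum, div_self hdsum_pos.ne', one_mul,
      sub_self]
  -- L * Lp fixes S * C
  have hLLpSC : L * Lp * (S * C) = S * C := by
    ext i j
    have h := congrFun (lemA (fun a => (S * C) a j) (hcolsum j)) i
    simp only [Matrix.mulVec, dotProduct] at h
    simpa [Matrix.mul_apply] using h
  -- u ⬝ᵥ u = 1
  have huu : u ⬝ᵥ u = 1 := by
    rw [hudef]
    simp only [dotProduct]
    have : ∀ i, Real.sqrt (d i) / Real.sqrt dsum * (Real.sqrt (d i) / Real.sqrt dsum)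
        = d i / dsum := by
      intro i
      rw [div_mul_div_comm, hsd, hrs]
    rw [Finset.sum_congr rfl fun i _ => this i, ← Finset.sum_div, ← hdsum,
      div_self hdsum_pos.ne']
  have hC2 : C * C = C := by
    have h1 : (1 - vecMulVec u u) * (1 - vecMulVec u u)
        = 1 - vecMulVec u u - vecMulVec u u + vecMulVec u u * vecMulVec u u := by
      noncomm_ring
    rw [hCdef, h1, vecMulVec_mul_vecMulVec', huu, one_smul]
    abel
  have hCsym : Cᵀ = C := by
    rw [hCdef, Matrix.transpose_sub, Matrix.transpose_one, vecMulVec_transpose']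
  have hSsym : Sᵀ = S := by rw [hSdef, Matrix.diagonal_transpose]
  have hSisym : Siᵀ = Si := by rw [hSidef, Matrix.diagonal_transpose]
  have h𝓛sym : 𝓛ᵀ = 𝓛 := by
    rw [h𝓛def, Matrix.transpose_mul, Matrix.transpose_mul, hSisym, hLsym, mul_assoc]
  have hQsym : Qᵀ = Q := by
    rw [hQdef]
    simp only [Matrix.transpose_mul, hCsym, hSsym, hLpsym]
    noncomm_ring
  have hSiS : Si * S = 1 := by
    rw [hSidef, hSdef, Matrix.diagonal_mul_diagonal]
    have : (fun i => (Real.sqrt (d i))⁻¹ * Real.sqrt (d i)) = fun _ : Fin N => (1:ℝ) := by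
      ext i; exact inv_mul_cancel₀ (hsd_pos i).ne'
    rw [this, Matrix.diagonal_one]
  have hSiu : Si *ᵥ u = fun _ : Fin N => (Real.sqrt dsum)⁻¹ := by
    ext i
    simp only [hSidef, Matrix.mulVec_diagonal, hudef]
    rw [div_eq_mul_inv, ← mul_assoc, inv_mul_cancel₀ (hsd_pos i).ne', one_mul]
  have huS : u ᵥ* S = fun j => u j * Real.sqrt (d j) := by
    ext j
    simp only [hSdef, Matrix.vecMul_diagonal]
  -- L * (Si * C * S) = L
  have hLSiCS : L * (Si * C * S) = L := by
    have h1 : Si * C * S = 1 - vecMulVec (fun _ : Fin N => (Real.sqrt dsum)⁻¹)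
        (fun j => u j * Real.sqrt (d j)) := by
      rw [hCdef, mul_sub, sub_mul, mul_one, hSiS]
      congr 1
      rw [mul_vecMulVec', vecMulVec_mul', hSiu, huS]
    rw [h1, mul_sub, mul_one, mul_vecMulVec']
    have h2 : L *ᵥ (fun _ : Fin N => (Real.sqrt dsum)⁻¹) = 0 := by
      have he : (fun _ : Fin N => (Real.sqrt dsum)⁻¹)
          = (Real.sqrt dsum)⁻¹ • (fun _ : Fin N => (1:ℝ)) := by ext a; simp
      rw [he, Matrix.mulVec_smul, hL1, smul_zero]
    rw [h2]
    have h3 : vecMulVec (0 : Fin N → ℝ) (fun j => u j * Real.sqrt (d j)) = 0 := by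
      ext a b; simp [Matrix.vecMulVec_apply]
    rw [h3, sub_zero]
  -- 𝓛 * Q = C
  have h𝓛Q : 𝓛 * Q = C := by
    calc 𝓛 * Q = Si * (L * (Si * C * S)) * Lp * (S * C) := by
          rw [h𝓛def, hQdef]; noncomm_ring
    _ = Si * L * Lp * (S * C) := by rw [hLSiCS]
    _ = Si * (L * Lp * (S * C)) := by noncomm_ring
    _ = Si * (S * C) := by rw [hLLpSC]
    _ = C := by rw [← mul_assoc, hSiS, one_mul]
  have hQ𝓛 : Q * 𝓛 = C := by
    calc Q * 𝓛 = (𝓛ᵀ * Qᵀ)ᵀ := by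
          rw [Matrix.transpose_mul, Matrix.transpose_transpose, Matrix.transpose_transpose]
    _ = (𝓛 * Q)ᵀ := by rw [h𝓛sym, hQsym]
    _ = Cᵀ := by rw [h𝓛Q]
    _ = C := hCsym
  -- C * 𝓛 = 𝓛
  have h𝓛u : 𝓛 *ᵥ u = 0 := by
    rw [h𝓛def, ← Matrix.mulVec_mulVec, ← Matrix.mulVec_mulVec, hSiu]
    have h2 : L *ᵥ (fun _ : Fin N => (Real.sqrt dsum)⁻¹) = 0 := by
      have he : (fun _ : Fin N => (Real.sqrt dsum)⁻¹)
          = (Real.sqrt dsum)⁻¹ • (fun _ : Fin N => (1:ℝ)) := by ext a; simp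
      rw [he, Matrix.mulVec_smul, hL1, smul_zero]
    rw [h2, Matrix.mulVec_zero]
  have hu𝓛 : u ᵥ* 𝓛 = 0 := by
    rw [← h𝓛sym, Matrix.vecMul_transpose, h𝓛u]
  have hC𝓛 : C * 𝓛 = 𝓛 := by
    rw [hCdef, sub_mul, one_mul, vecMulVec_mul', hu𝓛]
    have : vecMulVec u (0 : Fin N → ℝ) = 0 := by
      ext a b; simp [Matrix.vecMulVec_apply]
    rw [this, sub_zero]
  -- Q is the Moore-Penrose inverse of 𝓛
  have hQmp : IsMoorePenrose 𝓛 Q := by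
    refine ⟨?_, ?_, ?_, ?_⟩
    · rw [h𝓛Q, hC𝓛]
    · rw [hQ𝓛]
      calc C * Q = C * C * S * Lp * S * C := by rw [hQdef]; noncomm_ring
      _ = Q := by rw [hC2, hQdef]
    · rw [h𝓛Q, hCsym]
    · rw [hQ𝓛, hCsym]
  have hNpQ : Np = Q := mp_unique hNp hQmp
  -- key vector identity
  have hSCe : ∀ i, (S * C) *ᵥ Pi.single i 1
      = Real.sqrt (d i) • (Pi.single i 1 - pv) := by
    intro i
    ext a
    have h1 : ((S * C) *ᵥ Pi.single i 1) a = (S * C) a i := by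
      simp [Matrix.mulVec, dotProduct, Pi.single_apply]
    rw [h1, hSdef, Matrix.diagonal_mul, hCdef]
    simp only [Matrix.sub_apply, Matrix.one_apply, Matrix.vecMulVec_apply,
      Pi.smul_apply, Pi.sub_apply, Pi.single_apply, smul_eq_mul, hudef, hpv a]
    rcases eq_or_ne a i with h | h
    · subst h
      simp only [if_pos rfl]
      have hda := hsd a
      have hds := hrs
      set sa := Real.sqrt (d a) with hsa
      set rs := Real.sqrt dsum with hrs2
      have hsa0 : sa ≠ 0 := (hsd_pos a).ne'
      have hrs0 : rs ≠ 0 := hrs_pos.ne'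
      rw [← hda, ← hds]
      field_simp
      try ring
    · simp only [if_neg h]
      have hda := hsd a
      have hdi := hsd i
      have hds := hrs
      set sa := Real.sqrt (d a) with hsa
      set si := Real.sqrt (d i) with hsi
      set rs := Real.sqrt dsum with hrs2
      have hsa0 : sa ≠ 0 := (hsd_pos a).ne'
      have hrs0 : rs ≠ 0 := hrs_pos.ne'
      rw [← hda, ← hds]
      field_simp
      try ring
  -- per-term computation
  have hterm : ∀ i, Pi.single i 1 ⬝ᵥ Q *ᵥ Pi.single i 1
      = d i * ((Pi.single i 1 - pv) ⬝ᵥ Lp *ᵥ (Pi.single i 1 - pv)) := by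
    intro i
    have hQ' : Q = (S * C)ᵀ * (Lp * (S * C)) := by
      rw [Matrix.transpose_mul, hCsym, hSsym, hQdef]
      noncomm_ring
    calc Pi.single i 1 ⬝ᵥ Q *ᵥ Pi.single i 1
        = Pi.single i 1 ⬝ᵥ ((S * C)ᵀ *ᵥ ((Lp * (S * C)) *ᵥ Pi.single i 1)) := by
          rw [hQ', ← Matrix.mulVec_mulVec]
      _ = ((S * C) *ᵥ Pi.single i 1) ⬝ᵥ ((Lp * (S * C)) *ᵥ Pi.single i 1) := by
          rw [Matrix.dotProduct_mulVec, Matrix.vecMul_transpose]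
      _ = ((S * C) *ᵥ Pi.single i 1) ⬝ᵥ (Lp *ᵥ ((S * C) *ᵥ Pi.single i 1)) := by
          rw [Matrix.mulVec_mulVec]
      _ = (Real.sqrt (d i) • (Pi.single i 1 - pv)) ⬝ᵥ
            (Lp *ᵥ (Real.sqrt (d i) • (Pi.single i 1 - pv))) := by rw [hSCe i]
      _ = d i * ((Pi.single i 1 - pv) ⬝ᵥ Lp *ᵥ (Pi.single i 1 - pv)) := by
          rw [Matrix.mulVec_smul, smul_dotProduct, dotProduct_smul,
            smul_eq_mul, smul_eq_mul, ← mul_assoc, hsd]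
  -- final computation
  rw [hNpQ, Finset.mul_sum]
  refine Finset.sum_congr rfl fun i _ => ?_
  rw [hterm i, hpv i]
  field_simp
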